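/- Let H₇ be a connected simple graph containing two cycles C₁ and C₂ whose only common vertex is v, where d(v) ≥ 4 and C₂ is an endblock (every vertex of C₂ other than v has degree 2 in H₇). Let v₂ be a neighbor of v on C₁, let v₁ be a neighbor of v on C₂, and let v₀ be the neighbor of v₁ on C₂ other than v. Let H₈ = H₇ − {vv₂, v₀v₁} + {v₀v₂}. Then M₁(H₈) < M₁(H₇). -/

import Mathlib

open scoped Classical

/-- The first Zagreb index: the sum of the squares of the vertex degrees. -/
noncomputable def zagrebM1 {V : Type*} [Fintype V] (G : SimpleGraph V) : ℕ :=
  ∑ v : V, G.degree v ^ 2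

/-- Operation IV: `H₇` is connected and contains two cycles `c₁` and `c₂` whose
only common vertex is `v`, with `d(v) ≥ 4` and `c₂` an endblock (every vertex of
`c₂` other than `v` has degree 2 in `H₇`). If `v₂` is a neighbor of `v` on `c₁`,
`v₁` is a neighbor of `v` on `c₂`, and `v₀` is the neighbor of `v₁` on `c₂` other
than `v`, then `H₈ = H₇ - {vv₂, v₀v₁} + {v₀v₂}` satisfies `M₁(H₈) < M₁(H₇)`. -/
theorem M1_operationIV_lt {V : Type*} [Fintype V] (H₇ : SimpleGraph V)
    (hconn : H₇.Connected) (v v₀ v₁ v₂ : V)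
    (c₁ : H₇.Walk v v) (c₂ : H₇.Walk v v)
    (hc₁ : c₁.IsCycle) (hc₂ : c₂.IsCycle)
    (hmeet : ∀ x, x ∈ c₁.support → x ∈ c₂.support → x = v)
    (hdeg : 4 ≤ H₇.degree v)
    (hend : ∀ x ∈ c₂.support, x ≠ v → H₇.degree x = 2)
    (hv₂ : s(v, v₂) ∈ c₁.edges)
    (hv₁ : s(v, v₁) ∈ c₂.edges)
    (hv₀ : s(v₁, v₀) ∈ c₂.edges) (hv₀v : v₀ ≠ v)
    (H₈ : SimpleGraph V)
    (hH₈ : H₈ = SimpleGraph.fromEdgeSet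
      ((H₇.edgeSet \ {s(v, v₂), s(v₀, v₁)}) ∪ {s(v₀, v₂)})) :
    zagrebM1 H₈ < zagrebM1 H₇ := by
  classical
  subst hH₈
  set G := SimpleGraph.fromEdgeSet
      ((H₇.edgeSet \ {s(v, v₂), s(v₀, v₁)}) ∪ {s(v₀, v₂)}) with hG
  -- basic adjacencies
  have havv₂ : H₇.Adj v v₂ := (SimpleGraph.mem_edgeSet H₇).mp (c₁.edges_subset_edgeSet hv₂)
  have havv₁ : H₇.Adj v v₁ := (SimpleGraph.mem_edgeSet H₇).mp (c₂.edges_subset_edgeSet hv₁)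
  have hav₁v₀ : H₇.Adj v₁ v₀ := (SimpleGraph.mem_edgeSet H₇).mp (c₂.edges_subset_edgeSet hv₀)
  -- support memberships
  have hv₂c₁ : v₂ ∈ c₁.support := SimpleGraph.Walk.snd_mem_support_of_mem_edges c₁ hv₂
  have hv₁c₂ : v₁ ∈ c₂.support := SimpleGraph.Walk.snd_mem_support_of_mem_edges c₂ hv₁
  have hv₀c₂ : v₀ ∈ c₂.support := SimpleGraph.Walk.snd_mem_support_of_mem_edges c₂ hv₀
  have hv₂nc₂ : v₂ ∉ c₂.support := fun h => havv₂.ne' (hmeet v₂ hv₂c₁ h)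
  have hv₂v₀ : v₂ ≠ v₀ := fun h => hv₂nc₂ (h ▸ hv₀c₂)
  have hv₂v₁ : v₂ ≠ v₁ := fun h => hv₂nc₂ (h ▸ hv₁c₂)
  have hdv₁ : H₇.degree v₁ = 2 := hend v₁ hv₁c₂ havv₁.ne'
  -- adjacency characterization for G
  have hAdjG : ∀ a b : V, G.Adj a b ↔
      ((H₇.Adj a b ∧ s(a, b) ≠ s(v, v₂) ∧ s(a, b) ≠ s(v₀, v₁)) ∨ s(a, b) = s(v₀, v₂)) ∧ a ≠ b := by
    intro a b
    rw [hG, SimpleGraph.fromEdgeSet_adj]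
    simp only [Set.mem_union, Set.mem_diff, Set.mem_insert_iff, Set.mem_singleton_iff,
      SimpleGraph.mem_edgeSet]
    tauto
  -- degree inequality for all vertices
  have hdegle : ∀ x : V, G.degree x ≤ H₇.degree x := by
    intro x
    by_cases hx0 : x = v₀
    · rw [hx0]
      have hsub : G.neighborFinset v₀ ⊆ insert v₂ ((H₇.neighborFinset v₀).erase v₁) := by
        intro y hy
        rw [SimpleGraph.mem_neighborFinset] at hy
        rcases (hAdjG v₀ y).mp hy with ⟨h | h, hne⟩
        · refine Finset.mem_insert_of_mem (Finset.mem_erase.mpr ⟨?_, ?_⟩)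
          · intro hy1
            exact h.2.2 (by rw [hy1])
          · exact SimpleGraph.mem_neighborFinset _ _ _ |>.mpr h.1
        · rcases Sym2.eq_iff.mp h with ⟨_, rfl⟩ | ⟨h1, _⟩
          · exact Finset.mem_insert_self _ _
          · exact absurd h1.symm hv₂v₀
      calc G.degree v₀ ≤ (insert v₂ ((H₇.neighborFinset v₀).erase v₁)).card :=
            Finset.card_le_card hsub
        _ ≤ ((H₇.neighborFinset v₀).erase v₁).card + 1 := Finset.card_insert_le _ _
        _ = (H₇.neighborFinset v₀).card - 1 + 1 := by
            rw [Finset.card_erase_of_mem ((SimpleGraph.mem_neighborFinset _ _ _).mpr hav₁v₀.symm)]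
        _ = H₇.degree v₀ := Nat.sub_add_cancel
            (Finset.card_pos.mpr ⟨v₁, (SimpleGraph.mem_neighborFinset _ _ _).mpr hav₁v₀.symm⟩)
    · by_cases hx2 : x = v₂
      · rw [hx2]
        have hsub : G.neighborFinset v₂ ⊆ insert v₀ ((H₇.neighborFinset v₂).erase v) := by
          intro y hy
          rw [SimpleGraph.mem_neighborFinset] at hy
          rcases (hAdjG v₂ y).mp hy with ⟨h | h, hne⟩
          · refine Finset.mem_insert_of_mem (Finset.mem_erase.mpr ⟨?_, ?_⟩)
            · intro hy1
              exact h.2.1 (by rw [hy1, Sym2.eq_swap])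
            · exact SimpleGraph.mem_neighborFinset _ _ _ |>.mpr h.1
          · rcases Sym2.eq_iff.mp h with ⟨h1, _⟩ | ⟨_, rfl⟩
            · exact absurd h1 hv₂v₀
            · exact Finset.mem_insert_self _ _
        calc G.degree v₂ ≤ (insert v₀ ((H₇.neighborFinset v₂).erase v)).card :=
              Finset.card_le_card hsub
          _ ≤ ((H₇.neighborFinset v₂).erase v).card + 1 := Finset.card_insert_le _ _
          _ = (H₇.neighborFinset v₂).card - 1 + 1 := by
              rw [Finset.card_erase_of_mem ((SimpleGraph.mem_neighborFinset _ _ _).mpr havv₂.symm)]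
          _ = H₇.degree v₂ := Nat.sub_add_cancel
              (Finset.card_pos.mpr ⟨v, (SimpleGraph.mem_neighborFinset _ _ _).mpr havv₂.symm⟩)
      · apply Finset.card_le_card
        intro y hy
        rw [SimpleGraph.mem_neighborFinset] at hy ⊢
        rcases (hAdjG x y).mp hy with ⟨h | h, hne⟩
        · exact h.1
        · rcases Sym2.eq_iff.mp h with ⟨h1, _⟩ | ⟨h1, _⟩
          · exact absurd h1 hx0
          · exact absurd h1 hx2
  -- strict inequality at v₁
  have hstrict : G.degree v₁ < H₇.degree v₁ := by
    have hsub : G.neighborFinset v₁ ⊆ (H₇.neighborFinset v₁).erase v₀ := by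
      intro y hy
      rw [SimpleGraph.mem_neighborFinset] at hy
      rcases (hAdjG v₁ y).mp hy with ⟨h | h, hne⟩
      · refine Finset.mem_erase.mpr ⟨?_, (SimpleGraph.mem_neighborFinset _ _ _).mpr h.1⟩
        intro hy0
        exact h.2.2 (by rw [hy0, Sym2.eq_swap])
      · rcases Sym2.eq_iff.mp h with ⟨h1, _⟩ | ⟨h1, _⟩
        · exact absurd h1 hav₁v₀.ne
        · exact absurd h1.symm hv₂v₁
    calc G.degree v₁ ≤ ((H₇.neighborFinset v₁).erase v₀).card := Finset.card_le_card hsub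
      _ = (H₇.neighborFinset v₁).card - 1 :=
          Finset.card_erase_of_mem ((SimpleGraph.mem_neighborFinset _ _ _).mpr hav₁v₀)
      _ < H₇.degree v₁ := by
          have h2 : (H₇.neighborFinset v₁).card = 2 := hdv₁
          omega
  unfold zagrebM1
  apply Finset.sum_lt_sum
  · intro i _
    exact Nat.pow_le_pow_left (by convert hdegle i) 2
  · exact ⟨v₁, Finset.mem_univ _, Nat.pow_lt_pow_left (by convert hstrict) two_ne_zero⟩
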